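/- Let A ∈ ℝ^{d×k} with R = AAᵀ, let B be the invertible k × k matrix formed by the first k rows of A, and let Y = (Y₁, ..., Y_d) be a random vector with E[Y] = 0 and E[Y Yᵀ] = R. Set X = (Y₁, ..., Y_k) and V = B⁻¹X. Then E[V] = 0, E[V Vᵀ] = I_k, and AV = Y almost surely. -/

import Mathlib

open MeasureTheory
open scoped Matrix

private lemma l2_mul_integrable {Ω : Type*} [MeasurableSpace Ω] {μ : Measure Ω}
    {f g : Ω → ℝ} (hf : MemLp f 2 μ) (hg : MemLp g 2 μ) :
    Integrable (fun ω => f ω * g ω) μ := by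
  have h1 := (hf.add hg).integrable_sq
  have h2 := hf.integrable_sq
  have h3 := hg.integrable_sq
  have heq : (fun ω => f ω * g ω)
      = fun ω => (((f ω + g ω) ^ 2 - f ω ^ 2) - g ω ^ 2) / 2 :=
    funext fun ω => by ring
  rw [heq]
  exact ((h1.sub h2).sub h3).div_const 2

private lemma integral_sum_mul_const {Ω : Type*} [MeasurableSpace Ω] {μ : Measure Ω}
    {ι : Type*} [Fintype ι] (a : ι → ℝ) (f : ι → Ω → ℝ)
    (h : ∀ p, Integrable (f p) μ) :
    ∫ ω, (∑ p, a p * f p ω) ∂μ = ∑ p, a p * ∫ ω, f p ω ∂μ := by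
  rw [integral_finset_sum _ (fun p _ => (h p).const_mul (a p))]
  exact Finset.sum_congr rfl fun p _ => integral_const_mul _ _

private lemma integral_sum_mul_sum {Ω : Type*} [MeasurableSpace Ω] {μ : Measure Ω}
    {ι₁ ι₂ : Type*} [Fintype ι₁] [Fintype ι₂]
    (a : ι₁ → ℝ) (b : ι₂ → ℝ) (f : ι₁ → Ω → ℝ) (g : ι₂ → Ω → ℝ)
    (h : ∀ p q, Integrable (fun ω => f p ω * g q ω) μ) :
    ∫ ω, (∑ p, a p * f p ω) * (∑ q, b q * g q ω) ∂μ
      = ∑ p, ∑ q, a p * b q * ∫ ω, f p ω * g q ω ∂μ := by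
  have heq : ∀ ω, (∑ p, a p * f p ω) * (∑ q, b q * g q ω)
      = ∑ p, ∑ q, a p * b q * (f p ω * g q ω) := by
    intro ω
    rw [Finset.sum_mul_sum]
    exact Finset.sum_congr rfl fun p _ => Finset.sum_congr rfl fun q _ => by ring
  simp_rw [heq]
  rw [integral_finset_sum _ (fun p _ =>
    integrable_finset_sum _ (fun q _ => (h p q).const_mul _))]
  refine Finset.sum_congr rfl fun p _ => ?_
  rw [integral_finset_sum _ (fun q _ => (h p q).const_mul _)]
  exact Finset.sum_congr rfl fun q _ => integral_const_mul _ _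

private lemma triple_entry {l m n o : Type*} [Fintype m] [Fintype n]
    (P : Matrix l m ℝ) (M : Matrix m n ℝ) (Q : Matrix o n ℝ) (i : l) (j : o) :
    (P * M * Qᵀ) i j = ∑ p, ∑ q, P i p * Q j q * M p q := by
  simp only [Matrix.mul_apply, Matrix.transpose_apply, Finset.sum_mul]
  rw [Finset.sum_comm]
  exact Finset.sum_congr rfl fun p _ => Finset.sum_congr rfl fun q _ => by ring

/-- Given R = AAᵀ with the top k × k block B of A invertible, and a mean-zero
square-integrable random vector Y with second-moment matrix R, the random vector
V = B⁻¹X (where X consists of the first k components of Y) has mean zero,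
second-moment matrix I_k, and satisfies AV = Y almost surely. -/
theorem transformed_vector_props {Ω : Type*} [MeasurableSpace Ω] (μ : Measure Ω)
    [IsProbabilityMeasure μ] {d k : ℕ} (hk : k ≤ d)
    (R : Matrix (Fin d) (Fin d) ℝ) (A : Matrix (Fin d) (Fin k) ℝ)
    (hA : R = A * Aᵀ)
    (B : Matrix (Fin k) (Fin k) ℝ) (hB : B = Matrix.of fun i j : Fin k => A (Fin.castLE hk i) j)
    (hBinv : IsUnit B)
    (Y : Ω → Fin d → ℝ) (hYmeas : ∀ i, Measurable fun ω => Y ω i)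
    (hYL2 : ∀ i, MemLp (fun ω => Y ω i) 2 μ)
    (hmean : ∀ i, (∫ ω, Y ω i ∂μ) = 0)
    (hcov : ∀ i j, (∫ ω, Y ω i * Y ω j ∂μ) = R i j)
    (X : Ω → Fin k → ℝ) (hX : X = fun ω i => Y ω (Fin.castLE hk i))
    (V : Ω → Fin k → ℝ) (hV : V = fun ω => B⁻¹.mulVec (X ω)) :
    (∀ i, (∫ ω, V ω i ∂μ) = 0) ∧
    (∀ i j, (∫ ω, V ω i * V ω j ∂μ) = (1 : Matrix (Fin k) (Fin k) ℝ) i j) ∧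
    (∀ᵐ ω ∂μ, A.mulVec (V ω) = Y ω) := by
  have hBdet : IsUnit B.det := (Matrix.isUnit_iff_isUnit_det B).mp hBinv
  have hBTdet : IsUnit Bᵀ.det := by rwa [Matrix.det_transpose]
  have hIntYY : ∀ i j, Integrable (fun ω => Y ω i * Y ω j) μ :=
    fun i j => l2_mul_integrable (hYL2 i) (hYL2 j)
  have hIntY : ∀ i, Integrable (fun ω => Y ω i) μ :=
    fun i => (hYL2 i).integrable one_le_two
  -- V in explicit sum form
  have hVeq : ∀ ω i, V ω i = ∑ p, B⁻¹ i p * Y ω (Fin.castLE hk p) := by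
    intro ω i
    simp [hV, hX, Matrix.mulVec, dotProduct]
  -- the k×k block of R equals B * Bᵀ
  have hM : (Matrix.of fun p q : Fin k => R (Fin.castLE hk p) (Fin.castLE hk q)) = B * Bᵀ := by
    ext p q
    simp [hA, hB, Matrix.mul_apply]
  -- first k rows of R equal B * Aᵀ
  have hN : (Matrix.of fun (p : Fin k) (j : Fin d) => R (Fin.castLE hk p) j) = B * Aᵀ := by
    ext p j
    simp [hA, hB, Matrix.mul_apply]
  refine ⟨?_, ?_, ?_⟩
  · intro i
    simp_rw [hVeq]
    rw [integral_sum_mul_const (fun p => B⁻¹ i p)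
      (fun p ω => Y ω (Fin.castLE hk p)) (fun p => hIntY _)]
    simp [hmean]
  · intro i j
    simp_rw [hVeq]
    rw [integral_sum_mul_sum _ _ _ _ (fun p q => hIntYY _ _)]
    have key : B⁻¹ * (B * Bᵀ) * (B⁻¹)ᵀ = 1 := by
      rw [Matrix.transpose_nonsing_inv, ← Matrix.mul_assoc, Matrix.mul_assoc (B⁻¹ * B),
        Matrix.mul_nonsing_inv _ hBTdet, Matrix.mul_one, Matrix.nonsing_inv_mul _ hBdet]
    calc ∑ p, ∑ q, B⁻¹ i p * B⁻¹ j q * ∫ ω, Y ω (Fin.castLE hk p) * Y ω (Fin.castLE hk q) ∂μ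
        = (B⁻¹ * (B * Bᵀ) * (B⁻¹)ᵀ) i j := by
          rw [← hM, triple_entry]
          exact Finset.sum_congr rfl fun p _ => Finset.sum_congr rfl fun q _ => by
            rw [hcov]; rfl
      _ = (1 : Matrix (Fin k) (Fin k) ℝ) i j := by rw [key]
  · -- almost sure equality
    set C : Matrix (Fin d) (Fin k) ℝ := A * B⁻¹ with hC
    have hAV : ∀ ω i, A.mulVec (V ω) i = ∑ p, C i p * Y ω (Fin.castLE hk p) := by
      intro ω i
      rw [hV, Matrix.mulVec_mulVec, hX]
      simp [Matrix.mulVec, dotProduct]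
      rfl
    have hSL2 : ∀ i : Fin d, MemLp (fun ω => ∑ p, C i p * Y ω (Fin.castLE hk p)) 2 μ :=
      fun i => by
        have h := memLp_finset_sum' Finset.univ
          (fun (p : Fin k) _ => ((hYL2 (Fin.castLE hk p)).const_mul (C i p)))
        have heq : (∑ p : Fin k, fun x => C i p * Y x (Fin.castLE hk p))
            = fun ω => ∑ p : Fin k, C i p * Y ω (Fin.castLE hk p) := by
          funext ω; simp
        rwa [heq] at h
    have hzero : ∀ i : Fin d, ∀ᵐ ω ∂μ, A.mulVec (V ω) i = Y ω i := by
      intro i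
      -- matrix identities
      have hCMC : C * (B * Bᵀ) * Cᵀ = R := by
        rw [hC, Matrix.transpose_mul, Matrix.transpose_nonsing_inv]
        simp only [Matrix.mul_assoc]
        rw [Matrix.mul_nonsing_inv_cancel_left _ _ hBTdet,
          Matrix.nonsing_inv_mul_cancel_left _ _ hBdet, ← hA]
      have hCN : C * (B * Aᵀ) = R := by
        rw [hC, Matrix.mul_assoc, Matrix.nonsing_inv_mul_cancel_left _ _ hBdet, ← hA]
      -- integrals
      have hISS : ∫ ω, (∑ p, C i p * Y ω (Fin.castLE hk p))
          * (∑ q, C i q * Y ω (Fin.castLE hk q)) ∂μ = R i i := by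
        rw [integral_sum_mul_sum _ _ _ _ (fun p q => hIntYY _ _), ← hCMC, ← hM, triple_entry]
        exact Finset.sum_congr rfl fun p _ => Finset.sum_congr rfl fun q _ => by
          rw [hcov]; rfl
      have hISY : ∫ ω, (∑ p, C i p * Y ω (Fin.castLE hk p)) * Y ω i ∂μ = R i i := by
        have : ∀ ω, (∑ p, C i p * Y ω (Fin.castLE hk p)) * Y ω i
            = ∑ p, C i p * (Y ω (Fin.castLE hk p) * Y ω i) := by
          intro ω
          rw [Finset.sum_mul]
          exact Finset.sum_congr rfl fun p _ => by ring
        simp_rw [this]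
        rw [integral_sum_mul_const _ _ (fun p => hIntYY _ _)]
        have : ∑ p, C i p * R (Fin.castLE hk p) i = (C * (B * Aᵀ)) i i := by
          rw [← hN, Matrix.mul_apply]
          rfl
        simp_rw [hcov]
        rw [this, hCN]
      -- the difference
      set W : Ω → ℝ := fun ω => (∑ p, C i p * Y ω (Fin.castLE hk p)) - Y ω i with hW
      have hWL2 : MemLp W 2 μ := (hSL2 i).sub (hYL2 i)
      have hIntW2 : Integrable (fun ω => W ω ^ 2) μ := hWL2.integrable_sq
      have hintW2 : ∫ ω, W ω ^ 2 ∂μ = 0 := by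
        have hexp : ∀ ω, W ω ^ 2
            = (∑ p, C i p * Y ω (Fin.castLE hk p)) * (∑ q, C i q * Y ω (Fin.castLE hk q))
              - 2 * ((∑ p, C i p * Y ω (Fin.castLE hk p)) * Y ω i) + Y ω i * Y ω i := by
          intro ω; simp only [hW]; ring
        have hISSint : Integrable (fun ω => (∑ p, C i p * Y ω (Fin.castLE hk p))
            * (∑ q, C i q * Y ω (Fin.castLE hk q))) μ :=
          l2_mul_integrable (hSL2 i) (hSL2 i)
        have hISYint : Integrable (fun ω => (∑ p, C i p * Y ω (Fin.castLE hk p)) * Y ω i) μ :=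
          l2_mul_integrable (hSL2 i) (hYL2 i)
        have hc2 : Integrable (fun ω => 2 * ((∑ p, C i p * Y ω (Fin.castLE hk p)) * Y ω i)) μ :=
          hISYint.const_mul 2
        have hsub : Integrable (fun ω => (∑ p, C i p * Y ω (Fin.castLE hk p))
            * (∑ q, C i q * Y ω (Fin.castLE hk q))
            - 2 * ((∑ p, C i p * Y ω (Fin.castLE hk p)) * Y ω i)) μ := hISSint.sub hc2
        simp_rw [hexp]
        rw [integral_add hsub (hIntYY i i), integral_sub hISSint hc2, integral_const_mul,
          hISS, hISY, hcov]
        ring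
      have hae : (fun ω => W ω ^ 2) =ᵐ[μ] 0 :=
        (integral_eq_zero_iff_of_nonneg (fun ω => sq_nonneg _) hIntW2).mp hintW2
      filter_upwards [hae] with ω hω
      have hW0 : W ω = 0 := by
        have := pow_eq_zero_iff (n := 2) (by norm_num) |>.mp hω
        exact this
      rw [hAV ω i]
      have := sub_eq_zero.mp hW0
      exact this
    have := MeasureTheory.ae_all_iff.mpr hzero
    filter_upwards [this] with ω hω
    funext i
    exact hω i
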